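/- Let A_1, ..., A_n be events in a probability space such that each A_i is mutually independent of all but at most d of the other events, and P(A_i) ≤ p for all i. If e·p·(d+1) ≤ 1 then P(∩_{i=1}^n A_i^c) > 0. -/

import Mathlib

open MeasureTheory ProbabilityTheory

noncomputable def llF {Ω : Type*} [MeasurableSpace Ω] (μ : Measure Ω) {n : ℕ}
    (A : Fin n → Set Ω) (T : Finset (Fin n)) : ℝ :=
  (μ (⋂ j ∈ T, (A j)ᶜ)).toReal

noncomputable def llG {Ω : Type*} [MeasurableSpace Ω] (μ : Measure Ω) {n : ℕ}
    (A : Fin n → Set Ω) (i : Fin n) (T : Finset (Fin n)) : ℝ :=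
  (μ (A i ∩ ⋂ j ∈ T, (A j)ᶜ)).toReal

lemma llF_nonneg {Ω : Type*} [MeasurableSpace Ω] (μ : Measure Ω) {n : ℕ}
    (A : Fin n → Set Ω) (T : Finset (Fin n)) : 0 ≤ llF μ A T := ENNReal.toReal_nonneg

lemma llG_nonneg {Ω : Type*} [MeasurableSpace Ω] (μ : Measure Ω) {n : ℕ}
    (A : Fin n → Set Ω) (i : Fin n) (T : Finset (Fin n)) : 0 ≤ llG μ A i T := ENNReal.toReal_nonneg

lemma llF_add {Ω : Type*} [MeasurableSpace Ω] (μ : Measure Ω) [IsFiniteMeasure μ] {n : ℕ}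
    {A : Fin n → Set Ω} (hmeas : ∀ i, MeasurableSet (A i)) (j : Fin n) (T : Finset (Fin n)) :
    llF μ A T = llG μ A j T + llF μ A (insert j T) := by
  have h1 : (⋂ k ∈ insert j T, (A k)ᶜ) = (⋂ k ∈ T, (A k)ᶜ) \ A j := by
    rw [Finset.set_biInter_insert, Set.diff_eq, Set.inter_comm]
  have h2 := measure_inter_add_diff (μ := μ) (⋂ k ∈ T, (A k)ᶜ) (hmeas j)
  rw [Set.inter_comm] at h2
  unfold llF llG
  rw [h1, ← ENNReal.toReal_add (measure_ne_top _ _) (measure_ne_top _ _), h2]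

lemma ll_num (d : ℕ) (p : ℝ) (hbound : Real.exp 1 * p * (d + 1) ≤ 1) :
    p ≤ (1 / ((d : ℝ) + 2)) * (1 - 1 / ((d : ℝ) + 2)) ^ d := by
  set D : ℝ := (d : ℝ) with hD
  have hD0 : 0 ≤ D := Nat.cast_nonneg d
  have hd1 : (0:ℝ) < D + 1 := by linarith
  have hd2 : (0:ℝ) < D + 2 := by linarith
  have he : (0:ℝ) < Real.exp 1 := Real.exp_pos 1
  have h1mx : 1 - 1 / (D + 2) = (D + 1) / (D + 2) := by field_simp; ring
  rw [h1mx]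
  have h1 : 1 + 1 / (D + 1) ≤ Real.exp (1 / (D + 1)) := by
    have := Real.add_one_le_exp (1 / (D + 1)); linarith
  have h2 : ((D + 2) / (D + 1)) ^ (d + 1) ≤ Real.exp 1 := by
    have heq : (D + 2) / (D + 1) = 1 + 1 / (D + 1) := by field_simp; ring
    rw [heq]
    calc (1 + 1 / (D + 1)) ^ (d + 1) ≤ Real.exp (1 / (D + 1)) ^ (d + 1) := by
          apply pow_le_pow_left₀ (by positivity) h1
      _ = Real.exp (((d : ℕ) + 1 : ℕ) * (1 / (D + 1))) := by
          rw [Real.exp_nat_mul]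
      _ = Real.exp 1 := by
          congr 1
          push_cast
          field_simp
          rw [hD]
  have hp1 : p ≤ 1 / (Real.exp 1 * (D + 1)) := by
    rw [le_div_iff₀ (by positivity)]
    calc p * (Real.exp 1 * (D + 1)) = Real.exp 1 * p * (D + 1) := by ring
      _ ≤ 1 := hbound
  refine hp1.trans ?_
  have hpow : (D + 2) ^ (d + 1) ≤ Real.exp 1 * (D + 1) ^ (d + 1) := by
    have := mul_le_mul_of_nonneg_right h2 (le_of_lt (pow_pos hd1 (d + 1)))
    rwa [div_pow, div_mul_cancel₀] at this
    exact ne_of_gt (pow_pos hd1 (d + 1))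
  have hr : (1 / (D + 2)) * ((D + 1) / (D + 2)) ^ d = (D + 1) ^ d / (D + 2) ^ (d + 1) := by
    rw [div_pow, pow_succ]
    field_simp
  rw [hr, div_le_div_iff₀ (by positivity) (by positivity), one_mul]
  calc (D + 2) ^ (d + 1) ≤ Real.exp 1 * (D + 1) ^ (d + 1) := hpow
    _ = (D + 1) ^ d * (Real.exp 1 * (D + 1)) := by rw [pow_succ]; ring

/-- Symmetric Lovász Local Lemma: if each event `A i` has probability at most
`p`, each `A i` is mutually independent of all but at most `d` of the other
events (i.e. independent of the σ-algebra generated by the events indexed by a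
set of at least `n - 1 - d` other indices), and `e·p·(d+1) ≤ 1`, then with
positive probability none of the events occur. -/
theorem lovasz_local_lemma {Ω : Type*} [MeasurableSpace Ω] (μ : Measure Ω)
    [IsProbabilityMeasure μ] (n d : ℕ) (A : Fin n → Set Ω)
    (hmeas : ∀ i, MeasurableSet (A i)) (p : ℝ)
    (hp : ∀ i, (μ (A i)).toReal ≤ p)
    (hindep : ∀ i : Fin n, ∃ J : Finset (Fin n), i ∉ J ∧ n - 1 - d ≤ J.card ∧
      Indep (MeasurableSpace.generateFrom {A i})
        (MeasurableSpace.generateFrom {S : Set Ω | ∃ j ∈ J, S = A j}) μ)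
    (hbound : Real.exp 1 * p * (d + 1) ≤ 1) :
    0 < μ (⋂ i, (A i)ᶜ) := by
  set x : ℝ := 1 / ((d : ℝ) + 2) with hxdef
  have hx0 : 0 < x := by positivity
  have hx1 : x < 1 := by
    rw [hxdef, div_lt_one (by positivity)]
    have : (0:ℝ) ≤ (d:ℝ) := Nat.cast_nonneg d
    linarith
  have h1x0 : 0 < 1 - x := by linarith
  have h1x1 : 1 - x ≤ 1 := by linarith
  have hpx : p ≤ x * (1 - x) ^ d := ll_num d p hbound
  -- main induction
  have key : ∀ k : ℕ, ∀ S : Finset (Fin n), S.card ≤ k → ∀ i, i ∉ S →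
      llG μ A i S ≤ x * llF μ A S := by
    intro k
    induction k with
    | zero =>
      intro S hS i _
      have hSe : S = ∅ := Finset.card_eq_zero.mp (Nat.le_zero.mp hS)
      subst hSe
      have hG : llG μ A i ∅ ≤ p := by
        have : llG μ A i ∅ = (μ (A i)).toReal := by
          unfold llG; simp
        rw [this]; exact hp i
      have hF : llF μ A ∅ = 1 := by
        unfold llF; simp
      rw [hF, mul_one]
      have hpow1 : (1 - x) ^ d ≤ 1 := pow_le_one₀ (le_of_lt h1x0) h1x1
      nlinarith
    | succ k ih =>
      intro S hS i hiS
      obtain ⟨J, hiJ, hJcard, hind⟩ := hindep i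
      set S₂ : Finset (Fin n) := S ∩ J with hS₂def
      have hS₂S : S₂ ⊆ S := Finset.inter_subset_left
      -- cardinality bound
      have hcard₁ : (S \ S₂).card ≤ d := by
        have hSJ : S \ S₂ = S \ J := by
          rw [hS₂def, Finset.sdiff_inter_self_left]
        rw [hSJ]
        have hsub : S \ J ⊆ Finset.univ.erase i \ J := by
          apply Finset.sdiff_subset_sdiff _ le_rfl
          exact (Finset.subset_erase).mpr ⟨Finset.subset_univ S, hiS⟩
        have hJsub : J ⊆ Finset.univ.erase i :=
          (Finset.subset_erase).mpr ⟨Finset.subset_univ J, hiJ⟩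
        have h1 : (S \ J).card ≤ (Finset.univ.erase i \ J).card := Finset.card_le_card hsub
        have h2 : (Finset.univ.erase i \ J).card = (Finset.univ.erase i).card - J.card :=
          Finset.card_sdiff_of_subset hJsub
        have h3 : (Finset.univ.erase i).card = n - 1 := by
          rw [Finset.card_erase_of_mem (Finset.mem_univ i), Finset.card_univ, Fintype.card_fin]
        omega
      -- chain lemma
      have chain : ∀ m : ℕ, ∀ T : Finset (Fin n), S₂ ⊆ T → T ⊆ S → (T \ S₂).card = m →
          (1 - x) ^ m * llF μ A S₂ ≤ llF μ A T := by
        intro m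
        induction m with
        | zero =>
          intro T h1 h2 h3
          have : T = S₂ := Finset.Subset.antisymm
            (Finset.sdiff_eq_empty_iff_subset.mp (Finset.card_eq_zero.mp h3)) h1
          subst this
          simp
        | succ m ihm =>
          intro T h1 h2 h3
          obtain ⟨j, hj⟩ : (T \ S₂).Nonempty := Finset.card_pos.mp (by omega)
          have hjT : j ∈ T := (Finset.mem_sdiff.mp hj).1
          have hjS₂ : j ∉ S₂ := (Finset.mem_sdiff.mp hj).2
          set T' : Finset (Fin n) := T.erase j with hT'def
          have hT'sub : S₂ ⊆ T' := fun a ha =>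
            Finset.mem_erase.mpr ⟨fun he => hjS₂ (he ▸ ha), h1 ha⟩
          have hT'S : T' ⊆ S := (Finset.erase_subset j T).trans h2
          have hjT' : j ∉ T' := Finset.notMem_erase j T
          have hcardT' : (T' \ S₂).card = m := by
            have he : T' \ S₂ = (T \ S₂).erase j := by
              ext a
              simp only [hT'def, Finset.mem_sdiff, Finset.mem_erase]
              tauto
            rw [he, Finset.card_erase_of_mem hj, h3]
            omega
          have hT'k : T'.card ≤ k := by
            have h4 : T'.card = T.card - 1 := Finset.card_erase_of_mem hjT
            have h5 : T.card ≤ S.card := Finset.card_le_card h2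
            have h6 : 1 ≤ T.card := Finset.card_pos.mpr ⟨j, hjT⟩
            omega
          have hG : llG μ A j T' ≤ x * llF μ A T' := ih T' hT'k j hjT'
          have hadd : llF μ A T' = llG μ A j T' + llF μ A T := by
            rw [llF_add μ hmeas j T', Finset.insert_erase hjT]
          have hFT' : (1 - x) ^ m * llF μ A S₂ ≤ llF μ A T' := ihm T' hT'sub hT'S hcardT'
          have hexp : (1 - x) * llF μ A T' = llF μ A T' - x * llF μ A T' := by ring
          calc (1 - x) ^ (m + 1) * llF μ A S₂
              = (1 - x) * ((1 - x) ^ m * llF μ A S₂) := by ring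
            _ ≤ (1 - x) * llF μ A T' := by
                apply mul_le_mul_of_nonneg_left hFT' (le_of_lt h1x0)
            _ ≤ llF μ A T := by linarith
      -- independence step
      have hrule := (Indep_iff _ _ μ).mp hind
      have hm1 : MeasurableSet[MeasurableSpace.generateFrom {A i}] (A i) :=
        MeasurableSpace.measurableSet_generateFrom rfl
      have hm2 : MeasurableSet[MeasurableSpace.generateFrom
          {S : Set Ω | ∃ j ∈ J, S = A j}] (⋂ j ∈ S₂, (A j)ᶜ) := by
        apply MeasurableSet.biInter (S₂.countable_toSet)
        intro j hj
        have hjJ : j ∈ J := (Finset.mem_inter.mp (Finset.mem_coe.mp hj)).2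
        have hmem : A j ∈ {S : Set Ω | ∃ j ∈ J, S = A j} := ⟨j, hjJ, rfl⟩
        exact (MeasurableSpace.measurableSet_generateFrom hmem).compl
      have hmul : μ (A i ∩ ⋂ j ∈ S₂, (A j)ᶜ) = μ (A i) * μ (⋂ j ∈ S₂, (A j)ᶜ) :=
        hrule _ _ hm1 hm2
      have hgS₂ : llG μ A i S₂ = (μ (A i)).toReal * llF μ A S₂ := by
        unfold llG llF
        rw [hmul, ENNReal.toReal_mul]
      have hmono : llG μ A i S ≤ llG μ A i S₂ := by
        unfold llG
        apply ENNReal.toReal_mono (measure_ne_top _ _)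
        apply measure_mono
        apply Set.inter_subset_inter_right
        intro y hy
        simp only [Set.mem_iInter] at hy ⊢
        exact fun j hj => hy j (hS₂S hj)
      have hchainS : (1 - x) ^ ((S \ S₂).card) * llF μ A S₂ ≤ llF μ A S :=
        chain _ S hS₂S le_rfl rfl
      have hpowc : (1 - x) ^ d ≤ (1 - x) ^ ((S \ S₂).card) :=
        pow_le_pow_of_le_one (le_of_lt h1x0) h1x1 hcard₁
      have hF₂ : 0 ≤ llF μ A S₂ := llF_nonneg μ A S₂
      calc llG μ A i S ≤ llG μ A i S₂ := hmono
        _ = (μ (A i)).toReal * llF μ A S₂ := hgS₂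
        _ ≤ p * llF μ A S₂ := mul_le_mul_of_nonneg_right (hp i) hF₂
        _ ≤ (x * (1 - x) ^ d) * llF μ A S₂ := mul_le_mul_of_nonneg_right hpx hF₂
        _ ≤ (x * (1 - x) ^ ((S \ S₂).card)) * llF μ A S₂ := by
            apply mul_le_mul_of_nonneg_right _ hF₂
            exact mul_le_mul_of_nonneg_left hpowc (le_of_lt hx0)
        _ = x * ((1 - x) ^ ((S \ S₂).card) * llF μ A S₂) := by ring
        _ ≤ x * llF μ A S := mul_le_mul_of_nonneg_left hchainS (le_of_lt hx0)
  -- lower bound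
  have lower : ∀ S : Finset (Fin n), (1 - x) ^ S.card ≤ llF μ A S := by
    intro S
    induction S using Finset.induction_on with
    | empty =>
      have : llF μ A ∅ = 1 := by unfold llF; simp
      rw [this]; simp
    | insert j S' hjS ih' =>
      have hG : llG μ A j S' ≤ x * llF μ A S' := key S'.card S' le_rfl j hjS
      have hadd : llF μ A S' = llG μ A j S' + llF μ A (insert j S') := llF_add μ hmeas j S'
      rw [Finset.card_insert_of_notMem hjS]
      have hF' : 0 ≤ llF μ A S' := llF_nonneg μ A S'
      have : (1 - x) ^ (S'.card + 1) = (1 - x) * (1 - x) ^ S'.card := by ring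
      rw [this]
      have h1 : (1 - x) * (1 - x) ^ S'.card ≤ (1 - x) * llF μ A S' :=
        mul_le_mul_of_nonneg_left ih' (le_of_lt h1x0)
      have h2 : (1 - x) * llF μ A S' = llF μ A S' - x * llF μ A S' := by ring
      linarith
  have huniv : (⋂ i, (A i)ᶜ) = ⋂ j ∈ (Finset.univ : Finset (Fin n)), (A j)ᶜ := by simp
  have hlow : (1 - x) ^ n ≤ llF μ A Finset.univ := by
    have := lower Finset.univ
    rwa [Finset.card_univ, Fintype.card_fin] at this
  have hpos : 0 < llF μ A Finset.univ := lt_of_lt_of_le (pow_pos h1x0 n) hlow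
  rw [huniv]
  rw [pos_iff_ne_zero]
  intro h0
  rw [llF, h0] at hpos
  simp at hpos
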